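/- Let E be a field of characteristic 2 and Q = [a,b)_E the quaternion algebra with generators u, v satisfying u² + u = a, v² = b ∈ E^×, and uv = vu + v. If b ∉ E^{×2}, then Q splits (is isomorphic to M₂(E)) if and only if there exists c ∈ E with a + c²·b ∈ ℘(E) = {x² + x : x ∈ E}. -/

import Mathlib

/-- The defining relations of the characteristic-2 quaternion algebra `[a,b)_E`:
generators `u = X 0`, `v = X 1` with `u² = a + u` (i.e. `u² + u = a`), `v² = b`,
and `u v = v u + v`. -/
inductive QuatRel (E : Type*) [Field E] (a b : E) :
    FreeAlgebra E (Fin 2) → FreeAlgebra E (Fin 2) → Prop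
  | u_sq : QuatRel E a b (FreeAlgebra.ι E 0 * FreeAlgebra.ι E 0)
      (algebraMap E _ a + FreeAlgebra.ι E 0)
  | v_sq : QuatRel E a b (FreeAlgebra.ι E 1 * FreeAlgebra.ι E 1) (algebraMap E _ b)
  | mul : QuatRel E a b (FreeAlgebra.ι E 0 * FreeAlgebra.ι E 1)
      (FreeAlgebra.ι E 1 * FreeAlgebra.ι E 0 + FreeAlgebra.ι E 1)

/-- The characteristic-2 quaternion algebra `[a,b)_E`. -/
def Quat (E : Type*) [Field E] (a b : E) := RingQuot (QuatRel E a b)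

noncomputable instance (E : Type*) [Field E] (a b : E) : Ring (Quat E a b) :=
  inferInstanceAs (Ring (RingQuot (QuatRel E a b)))

noncomputable instance (E : Type*) [Field E] (a b : E) : Algebra E (Quat E a b) :=
  inferInstanceAs (Algebra E (RingQuot (QuatRel E a b)))


section
variable (E : Type*) [Field E] (a b : E)

noncomputable def qu : Quat E a b := RingQuot.mkAlgHom E (QuatRel E a b) (FreeAlgebra.ι E 0)
noncomputable def qv : Quat E a b := RingQuot.mkAlgHom E (QuatRel E a b) (FreeAlgebra.ι E 1)

theorem qu_sq : qu E a b * qu E a b = algebraMap E _ a + qu E a b := by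
  have h := RingQuot.mkAlgHom_rel E (QuatRel.u_sq (E := E) (a := a) (b := b))
  simp [qu, map_mul, map_add] at h ⊢; exact h

theorem qv_sq : qv E a b * qv E a b = algebraMap E _ b := by
  have h := RingQuot.mkAlgHom_rel E (QuatRel.v_sq (E := E) (a := a) (b := b))
  simp [qv, map_mul] at h ⊢; exact h

theorem quv : qu E a b * qv E a b = qv E a b * qu E a b + qv E a b := by
  have h := RingQuot.mkAlgHom_rel E (QuatRel.mul (E := E) (a := a) (b := b))
  simp [qu, qv, map_mul, map_add] at h ⊢; exact h

theorem quat_adjoin : Algebra.adjoin E ({qu E a b, qv E a b} : Set (Quat E a b)) = ⊤ := by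
  have hs : Function.Surjective (RingQuot.mkAlgHom E (QuatRel E a b)) :=
    RingQuot.mkAlgHom_surjective E _
  have himg : (RingQuot.mkAlgHom E (QuatRel E a b)) '' (Set.range (FreeAlgebra.ι E)) =
      {qu E a b, qv E a b} := by
    ext z
    simp only [Set.mem_image, Set.mem_range, exists_exists_eq_and, Set.mem_insert_iff,
      Set.mem_singleton_iff]
    constructor
    · rintro ⟨i, rfl⟩
      fin_cases i
      · left; rfl
      · right; rfl
    · rintro (rfl | rfl)
      exacts [⟨0, rfl⟩, ⟨1, rfl⟩]
  calc Algebra.adjoin E ({qu E a b, qv E a b} : Set (RingQuot (QuatRel E a b)))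
      = Algebra.adjoin E ((RingQuot.mkAlgHom E (QuatRel E a b)) ''
          (Set.range (FreeAlgebra.ι E))) := by rw [himg]
    _ = (Algebra.adjoin E (Set.range (FreeAlgebra.ι E))).map
          (RingQuot.mkAlgHom E (QuatRel E a b)) := (AlgHom.map_adjoin _ _).symm
    _ = ⊤ := by rw [FreeAlgebra.adjoin_range_ι, Algebra.map_top, (AlgHom.range_eq_top _).mpr hs]

theorem quat_span [CharP E 2] :
    Submodule.span E ({1, qu E a b, qv E a b, qu E a b * qv E a b} : Set (Quat E a b)) = ⊤ := by
  have h2 : (2 : E) = 0 := CharTwo.two_eq_zero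
  have hzz : ∀ z : Quat E a b, z + z = 0 := fun z => by
    rw [← two_smul E z, h2, zero_smul]
  have r1 := qu_sq E a b
  have r2 := qv_sq E a b
  have r3 := quv E a b
  set u := qu E a b with hu
  set v := qv E a b with hv
  have r3' : v * u = u * v + v := by
    rw [r3, add_assoc, hzz, add_zero]
  set S := Submodule.span E ({1, u, v, u * v} : Set (Quat E a b)) with hS
  have h1S : (1 : Quat E a b) ∈ S := Submodule.subset_span (by simp)
  have huS : u ∈ S := Submodule.subset_span (by simp)
  have hvS : v ∈ S := Submodule.subset_span (by simp)
  have hwS : u * v ∈ S := Submodule.subset_span (by simp)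
  have puu : u * u ∈ S := by
    rw [r1, Algebra.algebraMap_eq_smul_one]
    exact S.add_mem (S.smul_mem _ h1S) huS
  have huw_eq : u * (u * v) = a • v + u * v := by
    rw [← mul_assoc, r1, add_mul, Algebra.algebraMap_eq_smul_one, smul_mul_assoc, one_mul]
  have puw : u * (u * v) ∈ S := by
    rw [huw_eq]; exact S.add_mem (S.smul_mem _ hvS) hwS
  have pvu : v * u ∈ S := by rw [r3']; exact S.add_mem hwS hvS
  have pvv : v * v ∈ S := by
    rw [r2, Algebra.algebraMap_eq_smul_one]; exact S.smul_mem _ h1S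
  have pwv_eq : (u * v) * v = b • u := by
    rw [mul_assoc, r2, Algebra.algebraMap_eq_smul_one, mul_smul_comm, mul_one]
  have pwv : (u * v) * v ∈ S := by rw [pwv_eq]; exact S.smul_mem _ huS
  have pvw : v * (u * v) ∈ S := by
    rw [← mul_assoc, r3', add_mul, pwv_eq, r2, Algebra.algebraMap_eq_smul_one]
    exact S.add_mem (S.smul_mem _ huS) (S.smul_mem _ h1S)
  have pwu_eq : (u * v) * u = a • v := by
    rw [mul_assoc, r3', mul_add, huw_eq, add_assoc, hzz, add_zero]
  have pwu : (u * v) * u ∈ S := by rw [pwu_eq]; exact S.smul_mem _ hvS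
  have pww : (u * v) * (u * v) ∈ S := by
    rw [← mul_assoc, pwu_eq, smul_mul_assoc, r2, Algebra.algebraMap_eq_smul_one, smul_smul]
    exact S.smul_mem _ h1S
  have hgen : ∀ x ∈ ({1, u, v, u * v} : Set (Quat E a b)), ∀ y ∈ S, x * y ∈ S := by
    intro x hx y hy
    induction hy using Submodule.span_induction with
    | mem y hy =>
      simp only [Set.mem_insert_iff, Set.mem_singleton_iff] at hx hy
      rcases hx with rfl | rfl | rfl | rfl <;> rcases hy with rfl | rfl | rfl | rfl <;>
        (try simp only [one_mul, mul_one]) <;>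
        first
          | exact h1S | exact huS | exact hvS | exact hwS | exact puu | exact puw
          | exact pvu | exact pvv | exact pvw | exact pwu | exact pwv | exact pww
    | zero => rw [mul_zero]; exact S.zero_mem
    | add y z hy hz ihy ihz => rw [mul_add]; exact S.add_mem ihy ihz
    | smul r y hy ih => rw [mul_smul_comm]; exact S.smul_mem r ih
  have hmul : ∀ z1 ∈ S, ∀ z2 ∈ S, z1 * z2 ∈ S := by
    intro z1 h1 z2 hz2
    induction h1 using Submodule.span_induction with
    | mem x hx => exact hgen x hx z2 hz2
    | zero => rw [zero_mul]; exact S.zero_mem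
    | add y z hy hz ihy ihz => rw [add_mul]; exact S.add_mem ihy ihz
    | smul r y hy ih => rw [smul_mul_assoc]; exact S.smul_mem r ih
  rw [eq_top_iff]
  rintro z -
  have hz : z ∈ Algebra.adjoin E ({u, v} : Set (Quat E a b)) := by
    rw [quat_adjoin]; trivial
  refine Algebra.adjoin_induction ?_ ?_ ?_ ?_ hz
  · rintro x (rfl | rfl)
    exacts [huS, hvS]
  · intro r
    rw [Algebra.algebraMap_eq_smul_one]
    exact S.smul_mem _ h1S
  · intro x y _ _ hxS hyS
    exact S.add_mem hxS hyS
  · intro x y _ _ hxS hyS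
    exact hmul x hxS y hyS

theorem quat_scalar [CharP E 2] (α β γ δ p q r : E)
    (A : α * α + β * γ = a + α)
    (B : α * β + β * δ = β)
    (C : γ * α + δ * γ = γ)
    (V2a : p * p + q * r = b)
    (M1 : α * p + β * r = p * α + q * γ + p)
    (hb2 : ¬ ∃ e : E, e ^ 2 = b) :
    ∃ c x : E, a + c ^ 2 * b = x ^ 2 + x := by
  have h2 : (2 : E) = 0 := CharTwo.two_eq_zero
  by_cases hγ : γ = 0
  · by_cases hβ : β = 0
    · exact ⟨0, α, by subst hβ hγ; linear_combination -A - α * h2⟩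
    · have hδ : δ = α + 1 := by
        have hz : β * (α + δ - 1) = 0 := by linear_combination B
        rcases mul_eq_zero.1 hz with h | h
        · exact absurd h hβ
        · linear_combination h - α * h2
      have hq : q ≠ 0 := by
        intro h0
        exact hb2 ⟨p, by rw [h0] at V2a; linear_combination V2a⟩
      refine ⟨β / q, (p * β + (α + 1) * q) / q, ?_⟩
      subst hδ; subst hγ
      field_simp
      linear_combination (-(q^2))*A + (-(β^2))*V2a + (β*q)*M1 +
        (-(α*β*p*q) - β*p*q - 2*α*q^2 - q^2)*h2
  · have hδ : δ = α + 1 := by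
      have hz : γ * (α + δ - 1) = 0 := by linear_combination C
      rcases mul_eq_zero.1 hz with h | h
      · exact absurd h hγ
      · linear_combination h - α * h2
    have hr : r ≠ 0 := by
      intro h0
      exact hb2 ⟨p, by rw [h0] at V2a; linear_combination V2a⟩
    refine ⟨γ / r, (p * γ + α * r) / r, ?_⟩
    subst hδ
    field_simp
    linear_combination (-(r^2))*A + (-(γ^2))*V2a + (γ*r)*M1 +
      (-(α*γ*p*r) - α*r^2 + γ^2*q*r)*h2

end

set_option maxHeartbeats 1600000 in
theorem quat_backward (E : Type*) [Field E] [CharP E 2] (a b : E) (hb : b ≠ 0)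
    (c x : E) (hc : a + c ^ 2 * b = x ^ 2 + x) :
    Nonempty (Quat E a b ≃ₐ[E] Matrix (Fin 2) (Fin 2) E) := by
  have h2 : (2 : E) = 0 := CharTwo.two_eq_zero
  set U : Matrix (Fin 2) (Fin 2) E := !![x, c; c*b, x+1] with hUdef
  set V : Matrix (Fin 2) (Fin 2) E := !![0, 1; b, 0] with hVdef
  have hrel : ∀ ⦃y z : FreeAlgebra E (Fin 2)⦄, QuatRel E a b y z →
      (FreeAlgebra.lift E ![U, V]) y = (FreeAlgebra.lift E ![U, V]) z := by
    intro y z h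
    cases h <;>
      simp only [map_mul, map_add, FreeAlgebra.lift_ι_apply, AlgHom.commutes,
        Matrix.cons_val_zero, Matrix.cons_val_one, Matrix.head_cons] <;>
      · ext i j
        fin_cases i <;> fin_cases j <;>
          simp [hUdef, hVdef, Matrix.mul_fin_two, Matrix.algebraMap_matrix_apply] <;>
          first
            | ring1
            | linear_combination -hc + (c^2*b - x)*h2
            | linear_combination -hc + (c^2*b)*h2
            | linear_combination hc + (c^2*b - x)*h2
            | linear_combination (x*c)*h2
            | linear_combination (x*c*b)*h2
            | linear_combination -h2
            | linear_combination h2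
            | linear_combination (-1 - x)*h2
            | linear_combination (-1 - c)*h2
            | linear_combination (-1 - c*b)*h2
            | linear_combination (-1 - b)*h2
            | linear_combination (c*b)*h2
            | linear_combination x*h2
            | linear_combination (x*b)*h2
            | linear_combination b*h2
            | linear_combination c*h2
            | linear_combination (x+1)*h2
            | linear_combination (-x)*h2
            | linear_combination (-c)*h2
            | linear_combination (-c*b)*h2
            | linear_combination (-b)*h2
  obtain ⟨ψ, hψu, hψv⟩ : ∃ ψ : Quat E a b →ₐ[E] Matrix (Fin 2) (Fin 2) E,
      ψ (qu E a b) = U ∧ ψ (qv E a b) = V := by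
    refine ⟨RingQuot.liftAlgHom E ⟨FreeAlgebra.lift E ![U, V], hrel⟩, ?_, ?_⟩
    · have h := RingQuot.liftAlgHom_mkAlgHom_apply E (B := Matrix (Fin 2) (Fin 2) E)
        (FreeAlgebra.lift E ![U, V]) hrel (FreeAlgebra.ι E 0)
      exact h.trans (by simp)
    · have h := RingQuot.liftAlgHom_mkAlgHom_apply E (B := Matrix (Fin 2) (Fin 2) E)
        (FreeAlgebra.lift E ![U, V]) hrel (FreeAlgebra.ι E 1)
      exact h.trans (by simp)
  have hUmem : U ∈ ψ.range := ⟨qu E a b, hψu⟩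
  have hVmem : V ∈ ψ.range := ⟨qv E a b, hψv⟩
  have hWmem : U * V ∈ ψ.range :=
    (AlgHom.mem_range ψ).mpr ⟨qu E a b * qv E a b, by rw [map_mul, hψu, hψv]⟩
  have h1mem : (1 : Matrix (Fin 2) (Fin 2) E) ∈ ψ.range := one_mem _
  have hE11eq : (!![0,0;0,1] : Matrix (Fin 2) (Fin 2) E) = U + x • 1 + c • V := by
    ext i j
    fin_cases i <;> fin_cases j <;>
      simp [hUdef, hVdef, Matrix.one_apply] <;>
      first
        | ring1
        | linear_combination -hc + (c^2*b - x)*h2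
        | linear_combination -hc + (c^2*b)*h2
        | linear_combination hc + (c^2*b - x)*h2
        | linear_combination (x*c)*h2
        | linear_combination (x*c*b)*h2
        | linear_combination -h2
        | linear_combination h2
        | linear_combination (-1 - x)*h2
        | linear_combination (-1 - c)*h2
        | linear_combination (-1 - c*b)*h2
        | linear_combination (-1 - b)*h2
        | linear_combination (c*b)*h2
        | linear_combination x*h2
        | linear_combination (x*b)*h2
        | linear_combination b*h2
        | linear_combination c*h2
        | linear_combination (x+1)*h2
        | linear_combination (-x)*h2
        | linear_combination (-c)*h2
        | linear_combination (-c*b)*h2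
        | linear_combination (-b)*h2
  have hE11mem : (!![0,0;0,1] : Matrix (Fin 2) (Fin 2) E) ∈ ψ.range := by
    rw [hE11eq]
    exact add_mem (add_mem hUmem (Subalgebra.smul_mem _ h1mem _)) (Subalgebra.smul_mem _ hVmem _)
  have hE10eq : U * V + x • V + (c*b) • (1 : Matrix (Fin 2) (Fin 2) E) =
      b • !![0,0;1,0] := by
    ext i j
    fin_cases i <;> fin_cases j <;>
      simp [hUdef, hVdef, Matrix.mul_fin_two, Matrix.one_apply] <;>
      first
        | ring1
        | linear_combination -hc + (c^2*b - x)*h2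
        | linear_combination -hc + (c^2*b)*h2
        | linear_combination hc + (c^2*b - x)*h2
        | linear_combination (x*c)*h2
        | linear_combination (x*c*b)*h2
        | linear_combination -h2
        | linear_combination h2
        | linear_combination (-1 - x)*h2
        | linear_combination (-1 - c)*h2
        | linear_combination (-1 - c*b)*h2
        | linear_combination (-1 - b)*h2
        | linear_combination (c*b)*h2
        | linear_combination x*h2
        | linear_combination (x*b)*h2
        | linear_combination b*h2
        | linear_combination c*h2
        | linear_combination (x+1)*h2
        | linear_combination (-x)*h2
        | linear_combination (-c)*h2
        | linear_combination (-c*b)*h2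
        | linear_combination (-b)*h2
  have hE10mem : (!![0,0;1,0] : Matrix (Fin 2) (Fin 2) E) ∈ ψ.range := by
    have : (!![0,0;1,0] : Matrix (Fin 2) (Fin 2) E) =
        b⁻¹ • (U * V + x • V + (c*b) • 1) := by
      rw [hE10eq, smul_smul, inv_mul_cancel₀ hb, one_smul]
    rw [this]
    exact Subalgebra.smul_mem _
      (add_mem (add_mem hWmem (Subalgebra.smul_mem _ hVmem _))
        (Subalgebra.smul_mem _ h1mem _)) _
  have hE01eq : (!![0,1;0,0] : Matrix (Fin 2) (Fin 2) E) =
      V + b • !![0,0;1,0] := by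
    ext i j
    fin_cases i <;> fin_cases j <;>
      simp [hVdef] <;>
      first
        | ring1
        | linear_combination -hc + (c^2*b - x)*h2
        | linear_combination -hc + (c^2*b)*h2
        | linear_combination hc + (c^2*b - x)*h2
        | linear_combination (x*c)*h2
        | linear_combination (x*c*b)*h2
        | linear_combination -h2
        | linear_combination h2
        | linear_combination (-1 - x)*h2
        | linear_combination (-1 - c)*h2
        | linear_combination (-1 - c*b)*h2
        | linear_combination (-1 - b)*h2
        | linear_combination (c*b)*h2
        | linear_combination x*h2
        | linear_combination (x*b)*h2
        | linear_combination b*h2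
        | linear_combination c*h2
        | linear_combination (x+1)*h2
        | linear_combination (-x)*h2
        | linear_combination (-c)*h2
        | linear_combination (-c*b)*h2
        | linear_combination (-b)*h2
  have hE01mem : (!![0,1;0,0] : Matrix (Fin 2) (Fin 2) E) ∈ ψ.range := by
    rw [hE01eq]
    exact add_mem hVmem (Subalgebra.smul_mem _ hE10mem _)
  have hE00eq : (!![1,0;0,0] : Matrix (Fin 2) (Fin 2) E) =
      1 + !![0,0;0,1] := by
    ext i j
    fin_cases i <;> fin_cases j <;>
      simp [Matrix.one_apply] <;>
      first
        | ring1
        | linear_combination -hc + (c^2*b - x)*h2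
        | linear_combination -hc + (c^2*b)*h2
        | linear_combination hc + (c^2*b - x)*h2
        | linear_combination (x*c)*h2
        | linear_combination (x*c*b)*h2
        | linear_combination -h2
        | linear_combination h2
        | linear_combination (-1 - x)*h2
        | linear_combination (-1 - c)*h2
        | linear_combination (-1 - c*b)*h2
        | linear_combination (-1 - b)*h2
        | linear_combination (c*b)*h2
        | linear_combination x*h2
        | linear_combination (x*b)*h2
        | linear_combination b*h2
        | linear_combination c*h2
        | linear_combination (x+1)*h2
        | linear_combination (-x)*h2
        | linear_combination (-c)*h2
        | linear_combination (-c*b)*h2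
        | linear_combination (-b)*h2
  have hE00mem : (!![1,0;0,0] : Matrix (Fin 2) (Fin 2) E) ∈ ψ.range := by
    rw [hE00eq]
    exact add_mem h1mem hE11mem
  have hsur : Function.Surjective ψ := by
    intro M
    have hMrepr : M = M 0 0 • !![1,0;0,0] + M 0 1 • !![0,1;0,0] +
        M 1 0 • !![0,0;1,0] + M 1 1 • !![0,0;0,1] := by
      ext i j
      fin_cases i <;> fin_cases j <;> simp
    have : M ∈ ψ.range := by
      rw [hMrepr]
      exact add_mem (add_mem (add_mem (Subalgebra.smul_mem _ hE00mem _)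
        (Subalgebra.smul_mem _ hE01mem _)) (Subalgebra.smul_mem _ hE10mem _))
        (Subalgebra.smul_mem _ hE11mem _)
    exact this
  have hfin : Module.Finite E (Quat E a b) := by
    refine Module.finite_def.mpr (Submodule.fg_def.mpr
      ⟨{1, qu E a b, qv E a b, qu E a b * qv E a b}, ?_, quat_span E a b⟩)
    exact (Set.finite_singleton _).insert _ |>.insert _ |>.insert _
  have hrange : Set.range ![(1 : Quat E a b), qu E a b, qv E a b, qu E a b * qv E a b] =
      {1, qu E a b, qv E a b, qu E a b * qv E a b} := by
    ext z
    simp [Matrix.range_cons, Matrix.range_empty]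
    tauto
  have hrank : Module.finrank E (Quat E a b) ≤ 4 := by
    have := finrank_le_of_span_eq_top
      (v := ![(1 : Quat E a b), qu E a b, qv E a b, qu E a b * qv E a b])
      (by rw [hrange]; exact quat_span E a b)
    simpa using this
  have hrtop : LinearMap.range ψ.toLinearMap = ⊤ := LinearMap.range_eq_top.mpr hsur
  have hrn := LinearMap.finrank_range_add_finrank_ker ψ.toLinearMap
  rw [hrtop, finrank_top] at hrn
  have hmat : Module.finrank E (Matrix (Fin 2) (Fin 2) E) = 4 := by
    rw [Module.finrank_matrix]
    simp
  have hker0 : Module.finrank E (LinearMap.ker ψ.toLinearMap) = 0 := by omega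
  have hkerbot : LinearMap.ker ψ.toLinearMap = ⊥ := Submodule.finrank_eq_zero.mp hker0
  have hinj : Function.Injective ψ := LinearMap.ker_eq_bot.mp hkerbot
  exact ⟨AlgEquiv.ofBijective ψ ⟨hinj, hsur⟩⟩

/-- If `b ∉ E^{×2}`, then `[a,b)_E` splits iff `a + c²·b ∈ ℘(E)`
for some `c ∈ E`. -/
theorem stmt3 (E : Type*) [Field E] [CharP E 2] (a b : E) (hb : b ≠ 0)
    (hb2 : ¬ ∃ e : E, e ^ 2 = b) :
    Nonempty (Quat E a b ≃ₐ[E] Matrix (Fin 2) (Fin 2) E) ↔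
      ∃ c x : E, a + c ^ 2 * b = x ^ 2 + x := by
  have h2 : (2 : E) = 0 := CharTwo.two_eq_zero
  constructor
  · rintro ⟨g⟩
    set U : Matrix (Fin 2) (Fin 2) E := g (qu E a b) with hUdef
    set V : Matrix (Fin 2) (Fin 2) E := g (qv E a b) with hVdef
    have hU : U * U = algebraMap E _ a + U := by
      have := congrArg g (qu_sq E a b)
      simpa [map_mul, map_add, AlgEquiv.commutes] using this
    have hV : V * V = algebraMap E _ b := by
      have := congrArg g (qv_sq E a b)
      simpa [map_mul] using this
    have hUV : U * V = V * U + V := by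
      have := congrArg g (quv E a b)
      simpa [map_mul, map_add] using this
    have A : U 0 0 * U 0 0 + U 0 1 * U 1 0 = a + U 0 0 := by
      have := congrFun (congrFun hU 0) 0
      simpa [Matrix.mul_apply, Fin.sum_univ_two, Matrix.algebraMap_matrix_apply] using this
    have B : U 0 0 * U 0 1 + U 0 1 * U 1 1 = U 0 1 := by
      have := congrFun (congrFun hU 0) 1
      simpa [Matrix.mul_apply, Fin.sum_univ_two, Matrix.algebraMap_matrix_apply] using this
    have C : U 1 0 * U 0 0 + U 1 1 * U 1 0 = U 1 0 := by
      have := congrFun (congrFun hU 1) 0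
      simpa [Matrix.mul_apply, Fin.sum_univ_two, Matrix.algebraMap_matrix_apply,
        mul_comm] using this
    have V2a : V 0 0 * V 0 0 + V 0 1 * V 1 0 = b := by
      have := congrFun (congrFun hV 0) 0
      simpa [Matrix.mul_apply, Fin.sum_univ_two, Matrix.algebraMap_matrix_apply] using this
    have M1 : U 0 0 * V 0 0 + U 0 1 * V 1 0 = V 0 0 * U 0 0 + V 0 1 * U 1 0 + V 0 0 := by
      have := congrFun (congrFun hUV 0) 0
      simpa [Matrix.mul_apply, Fin.sum_univ_two] using this
    exact quat_scalar E a b (U 0 0) (U 0 1) (U 1 0) (U 1 1) (V 0 0) (V 0 1) (V 1 0)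
      A B C V2a M1 hb2
  · rintro ⟨c, x, hc⟩
    exact quat_backward E a b hb c x hc
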